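/- Let f : ℕ → ℕ satisfy f(1) = 1, f(mn) = f(m)·f(n) for all m, n ≥ 1, and suppose f is strictly increasing on the positive integers (f(m) < f(n) whenever 1 ≤ m < n). Then there exists a positive integer r such that f(N) = N^r for every N ≥ 1. -/

import Mathlib

open Finset Filter Real

/-- Iterated forward difference of `x ↦ x ^ c` (real power). -/
private noncomputable def hardyS (c : ℝ) : ℕ → ℝ → ℝ
  | 0 => fun x => x ^ c
  | (k+1) => fun x => hardyS c k (x+1) - hardyS c k x

private lemma hardyS_hasDerivAt (c : ℝ) (k : ℕ) :
    ∀ x : ℝ, 0 < x → HasDerivAt (hardyS c k) (c * hardyS (c-1) k x) x := by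
  induction k with
  | zero =>
    intro x hx
    have h := Real.hasDerivAt_rpow_const (x := x) (p := c) (Or.inl (ne_of_gt hx))
    have e1 : hardyS c 0 = fun y => y ^ c := rfl
    have e2 : c * hardyS (c-1) 0 x = c * x ^ (c-1) := rfl
    rw [e1, e2]
    exact h
  | succ k ih =>
    intro x hx
    have h1 : HasDerivAt (fun y => hardyS c k (y+1)) (c * hardyS (c-1) k (x+1)) x := by
      have := (ih (x+1) (by linarith)).comp x ((hasDerivAt_id x).add_const 1)
      rw [mul_one] at this
      exact this
    have h2 := ih x hx
    have h := h1.sub h2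
    have e1 : hardyS c (k+1) = fun y => hardyS c k (y+1) - hardyS c k y := rfl
    have e2 : c * hardyS (c-1) (k+1) x
        = c * hardyS (c-1) k (x+1) - c * hardyS (c-1) k x := by
      have : hardyS (c-1) (k+1) x = hardyS (c-1) k (x+1) - hardyS (c-1) k x := rfl
      rw [this]; ring
    rw [e1, e2]
    exact h

private lemma hardyS_mvt : ∀ (k : ℕ) (c x : ℝ), 0 < x →
    ∃ ξ : ℝ, x ≤ ξ ∧ ξ ≤ x + k ∧
      hardyS c k x = (∏ j ∈ Finset.range k, (c - (j:ℝ))) * ξ ^ (c - (k:ℝ)) := by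
  intro k
  induction k with
  | zero =>
    intro c x hx
    exact ⟨x, le_refl x, by simp, by simp [hardyS]⟩
  | succ k ih =>
    intro c x hx
    have hderiv : ∀ y ∈ Set.Ioo x (x+1), HasDerivAt (hardyS c k) (c * hardyS (c-1) k y) y :=
      fun y hy => hardyS_hasDerivAt c k y (lt_trans hx hy.1)
    have hcont : ContinuousOn (hardyS c k) (Set.Icc x (x+1)) := fun y hy =>
      ((hardyS_hasDerivAt c k y (lt_of_lt_of_le hx hy.1)).continuousAt).continuousWithinAt
    obtain ⟨ξ₀, hξ₀, heq⟩ := exists_hasDerivAt_eq_slope (hardyS c k)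
      (fun y => c * hardyS (c-1) k y) (by linarith : x < x + 1) hcont hderiv
    obtain ⟨ξ, hξ1, hξ2, hξ3⟩ := ih (c-1) ξ₀ (lt_trans hx hξ₀.1)
    refine ⟨ξ, by linarith [hξ₀.1], ?_, ?_⟩
    · push_cast
      linarith [hξ₀.2]
    · have hval : hardyS c (k+1) x = c * hardyS (c-1) k ξ₀ := by
        have e1 : hardyS c (k+1) x = hardyS c k (x+1) - hardyS c k x := rfl
        have e2 : x + 1 - x = 1 := by ring
        rw [e1, heq, e2, div_one]
      rw [hval, hξ3]
      have hexp : c - ((k:ℕ)+1 : ℝ) = (c - 1) - (k:ℝ) := by ring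
      have hcast : ((k+1 : ℕ) : ℝ) = (k:ℝ) + 1 := by push_cast; ring
      rw [hcast, hexp, Finset.prod_range_succ']
      have hp : (∏ j ∈ Finset.range k, (c - ((j+1 : ℕ):ℝ)))
          = ∏ j ∈ Finset.range k, ((c - 1) - (j:ℝ)) := by
        apply Finset.prod_congr rfl
        intro j _
        push_cast
        ring
      rw [hp]
      push_cast
      ring

theorem stmt_0 (f : ℕ → ℕ) (h1 : f 1 = 1)
    (hmul : ∀ m n : ℕ, 1 ≤ m → 1 ≤ n → f (m * n) = f m * f n)
    (hmono : ∀ m n : ℕ, 1 ≤ m → m < n → f m < f n) :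
    ∃ r : ℕ, 0 < r ∧ ∀ N : ℕ, 1 ≤ N → f N = N ^ r := by
  have hmono' : ∀ m n : ℕ, 1 ≤ m → m ≤ n → f m ≤ f n := by
    intro m n h1m hmn
    rcases eq_or_lt_of_le hmn with h|h
    · rw [h]
    · exact le_of_lt (hmono m n h1m h)
  have hfpos : ∀ n : ℕ, 1 ≤ n → 1 ≤ f n := by
    intro n hn
    have := hmono' 1 n le_rfl hn
    omega
  have ha2 : 2 ≤ f 2 := by
    have := hmono 1 2 le_rfl one_lt_two
    omega
  have hpow : ∀ m k : ℕ, 1 ≤ m → f (m ^ k) = f m ^ k := by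
    intro m k hm
    induction k with
    | zero => simpa using h1
    | succ k ih =>
      rw [pow_succ, hmul (m^k) m (Nat.one_le_pow _ _ (by omega)) hm, ih, pow_succ]
  set a := f 2 with ha
  set c := Real.log a / Real.log 2 with hc
  have hlog2 : (0:ℝ) < Real.log 2 := Real.log_pos one_lt_two
  have hloga : (0:ℝ) < Real.log a := Real.log_pos (by exact_mod_cast ha2)
  -- the squeeze: `log (f n) * log 2 = log n * log a` for `n ≥ 2`
  have key0 : ∀ n : ℕ, 2 ≤ n → Real.log (f n) * Real.log 2 = Real.log n * Real.log a := by
    intro n hn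
    have hfn2 : 2 ≤ f n := le_trans ha2 (hmono' 2 n (by omega) hn)
    set u := Real.log (f n) / Real.log a with hu
    set v := Real.log n / Real.log 2 with hv
    have hbound : ∀ k : ℕ, 1 ≤ k → |u - v| ≤ 1 / k := by
      intro k hk
      have hkR : (0:ℝ) < (k:ℝ) := by exact_mod_cast hk
      set l := Nat.log 2 (n ^ k) with hl
      have hnk1 : 1 ≤ n ^ k := Nat.one_le_pow _ _ (by omega)
      have hlow : 2 ^ l ≤ n ^ k := Nat.pow_log_le_self 2 (by omega)
      have hhigh : n ^ k < 2 ^ (l+1) := Nat.lt_pow_succ_log_self one_lt_two _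
      have hflow : a ^ l ≤ f n ^ k := by
        rw [← hpow 2 l (by omega), ← hpow n k (by omega)]
        exact hmono' _ _ (Nat.one_le_pow _ _ (by omega)) hlow
      have hfhigh : f n ^ k < a ^ (l+1) := by
        rw [← hpow 2 (l+1) (by omega), ← hpow n k (by omega)]
        exact hmono _ _ hnk1 hhigh
      -- real log versions
      have c1 : (l:ℝ) * Real.log a ≤ (k:ℝ) * Real.log (f n) := by
        have h' : ((a:ℝ)) ^ l ≤ ((f n : ℝ)) ^ k := by exact_mod_cast hflow
        have := Real.log_le_log (by positivity) h'
        simpa [Real.log_pow] using this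
      have c2 : (k:ℝ) * Real.log (f n) ≤ ((l:ℝ)+1) * Real.log a := by
        have h' : ((f n : ℝ)) ^ k ≤ ((a:ℝ)) ^ (l+1) := by exact_mod_cast hfhigh.le
        have := Real.log_le_log (by positivity) h'
        simpa [Real.log_pow] using this
      have c3 : (l:ℝ) * Real.log 2 ≤ (k:ℝ) * Real.log n := by
        have h' : ((2:ℝ)) ^ l ≤ ((n:ℝ)) ^ k := by exact_mod_cast hlow
        have := Real.log_le_log (by positivity) h'
        simpa [Real.log_pow] using this
      have c4 : (k:ℝ) * Real.log n ≤ ((l:ℝ)+1) * Real.log 2 := by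
        have h' : ((n:ℝ)) ^ k ≤ ((2:ℝ)) ^ (l+1) := by exact_mod_cast hhigh.le
        have := Real.log_le_log (by positivity) h'
        simpa [Real.log_pow] using this
      have hku1 : (l:ℝ) ≤ (k:ℝ) * u := by
        rw [hu, mul_div_assoc']
        rw [le_div_iff₀ hloga]
        linarith
      have hku2 : (k:ℝ) * u ≤ (l:ℝ) + 1 := by
        rw [hu, mul_div_assoc']
        rw [div_le_iff₀ hloga]
        linarith
      have hkv1 : (l:ℝ) ≤ (k:ℝ) * v := by
        rw [hv, mul_div_assoc']
        rw [le_div_iff₀ hlog2]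
        linarith
      have hkv2 : (k:ℝ) * v ≤ (l:ℝ) + 1 := by
        rw [hv, mul_div_assoc']
        rw [div_le_iff₀ hlog2]
        linarith
      have habs : |(k:ℝ) * u - (k:ℝ) * v| ≤ 1 := by
        rw [abs_le]
        constructor <;> linarith
      have : |u - v| * (k:ℝ) ≤ 1 := by
        calc |u - v| * (k:ℝ) = |u - v| * |(k:ℝ)| := by rw [abs_of_pos hkR]
        _ = |(u - v) * (k:ℝ)| := (abs_mul _ _).symm
        _ = |(k:ℝ) * u - (k:ℝ) * v| := by ring_nf
        _ ≤ 1 := habs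
      rw [le_div_iff₀ hkR]
      linarith
    have huv : u = v := by
      by_contra h
      have habs : 0 < |u - v| := abs_pos.mpr (sub_ne_zero.mpr h)
      obtain ⟨k, hk⟩ := exists_nat_gt (1 / |u - v|)
      have hk1 : 1 ≤ k := by
        by_contra h'
        have : k = 0 := by omega
        rw [this] at hk
        have : (0:ℝ) < 1 / |u - v| := by positivity
        norm_num at hk
        linarith
      have hb := hbound k hk1
      have hkR : (0:ℝ) < (k:ℝ) := by exact_mod_cast hk1
      have : (1:ℝ) / k < |u - v| := by
        rw [div_lt_iff₀ hkR]
        rw [div_lt_iff₀ habs] at hk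
        linarith
      linarith
    rw [hu, hv, div_eq_div_iff hloga.ne' hlog2.ne'] at huv
    linarith
  -- f n = n ^ c (real powers)
  have key : ∀ n : ℕ, 1 ≤ n → (f n : ℝ) = (n:ℝ) ^ c := by
    intro n hn
    rcases eq_or_lt_of_le hn with h|h
    · rw [← h]
      simp [h1, Real.one_rpow]
    · have hn2 : 2 ≤ n := h
      have hfn2 : 2 ≤ f n := le_trans ha2 (hmono' 2 n (by omega) hn2)
      have hfpos' : (0:ℝ) < (f n : ℝ) := by exact_mod_cast (by omega : 0 < f n)
      have hnpos : (0:ℝ) < (n:ℝ) := by exact_mod_cast (by omega : 0 < n)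
      have hlogeq : Real.log ((f n : ℝ)) = Real.log ((n:ℝ) ^ c) := by
        rw [Real.log_rpow hnpos, hc]
        have := key0 n hn2
        field_simp
        linarith
      calc (f n : ℝ) = Real.exp (Real.log (f n)) := (Real.exp_log hfpos').symm
      _ = Real.exp (Real.log ((n:ℝ) ^ c)) := by rw [hlogeq]
      _ = (n:ℝ) ^ c := Real.exp_log (Real.rpow_pos_of_pos hnpos c)
  have hca : (a:ℝ) = (2:ℝ) ^ c := by
    have := key 2 (by omega)
    simpa using this
  have hc1 : 1 ≤ c := by
    have h2a : (2:ℝ) ^ (1:ℝ) ≤ (2:ℝ) ^ c := by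
      rw [Real.rpow_one, ← hca]
      exact_mod_cast ha2
    exact (Real.rpow_le_rpow_left_iff one_lt_two).mp h2a
  set k := ⌈c⌉₊ with hkdef
  have hk1 : 1 ≤ k := Nat.one_le_ceil_iff.mpr (by linarith)
  have hck : c ≤ (k:ℝ) := Nat.le_ceil c
  by_cases hceq : c = (k:ℝ)
  · refine ⟨k, hk1, ?_⟩
    intro N hN
    have hkey := key N hN
    rw [hceq, Real.rpow_natCast] at hkey
    have : (f N : ℝ) = ((N ^ k : ℕ) : ℝ) := by rw [hkey]; push_cast; ring
    exact_mod_cast this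
  · exfalso
    have hck' : c < (k:ℝ) := lt_of_le_of_ne hck hceq
    have hkc : (k:ℝ) - 1 < c := by
      have h' : ((k-1:ℕ):ℝ) < c := Nat.lt_ceil.mp (by omega)
      have hcast : ((k-1:ℕ):ℝ) = (k:ℝ) - 1 := by
        push_cast [Nat.cast_sub hk1]
        ring
      linarith [hcast ▸ h']
    set P := ∏ j ∈ Finset.range k, (c - (j:ℝ)) with hP
    have hPpos : 0 < P := by
      apply Finset.prod_pos
      intro j hj
      have hjk : j < k := Finset.mem_range.mp hj
      have : (j:ℝ) ≤ (k:ℝ) - 1 := by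
        have : (j:ℝ) + 1 ≤ (k:ℝ) := by exact_mod_cast hjk
        linarith
      linarith
    -- the integer values of the finite differences
    have hint : ∀ (kk n : ℕ), 1 ≤ n → ∃ z : ℤ, (z:ℝ) = hardyS c kk (n:ℝ) := by
      intro kk
      induction kk with
      | zero =>
        intro n hn
        exact ⟨f n, by simpa [hardyS] using key n hn⟩
      | succ kk ih =>
        intro n hn
        obtain ⟨z₁, h₁⟩ := ih (n+1) (by omega)
        obtain ⟨z₂, h₂⟩ := ih n hn
        refine ⟨z₁ - z₂, ?_⟩
        have e : hardyS c (kk+1) (n:ℝ) = hardyS c kk ((n:ℝ)+1) - hardyS c kk (n:ℝ) := rfl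
        have hcast : ((n+1:ℕ):ℝ) = (n:ℝ) + 1 := by push_cast; ring
        rw [e, ← h₂, ← hcast, ← h₁]
        push_cast
        ring
    -- choose n large enough
    have hexp : (0:ℝ) < (k:ℝ) - c := by linarith
    have htend : Tendsto (fun n : ℕ => P * (n:ℝ) ^ (c - (k:ℝ))) atTop (nhds 0) := by
      have h0 := (tendsto_rpow_neg_atTop hexp).comp tendsto_natCast_atTop_atTop
      have heq' : (fun n : ℕ => P * (n:ℝ) ^ (c - (k:ℝ)))
          = fun n : ℕ => P * ((fun x : ℝ => x ^ (-((k:ℝ) - c))) ∘ (fun n : ℕ => (n:ℝ))) n := by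
        funext n
        simp only [Function.comp_apply]
        norm_num
      rw [heq']
      simpa using h0.const_mul P
    have hev : ∀ᶠ n : ℕ in atTop, P * (n:ℝ) ^ (c - (k:ℝ)) < 1 :=
      htend.eventually_lt_const one_pos
    obtain ⟨n, hnlt, hn1⟩ := (hev.and (eventually_ge_atTop 1)).exists
    have hnpos : (0:ℝ) < (n:ℝ) := by exact_mod_cast (by omega : 0 < n)
    obtain ⟨ξ, hξ1, hξ2, hξ3⟩ := hardyS_mvt k c (n:ℝ) hnpos
    obtain ⟨z, hz⟩ := hint k n hn1
    have hξpos : (0:ℝ) < ξ := lt_of_lt_of_le hnpos hξ1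
    have hup : hardyS c k (n:ℝ) ≤ P * (n:ℝ) ^ (c - (k:ℝ)) := by
      rw [hξ3]
      apply mul_le_mul_of_nonneg_left _ hPpos.le
      exact Real.rpow_le_rpow_of_nonpos hnpos hξ1 (by linarith)
    have hlo : 0 < hardyS c k (n:ℝ) := by
      rw [hξ3]
      positivity
    have h01 : (0:ℤ) < z := by
      have : (0:ℝ) < (z:ℝ) := hz ▸ hlo
      exact_mod_cast this
    have h11 : (z:ℤ) < 1 := by
      have : (z:ℝ) < 1 := lt_of_le_of_lt (hz ▸ hup) hnlt
      exact_mod_cast this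
    omega
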